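/- For every integer m ≥ 7, V(F_m) = 2V(F_{m-1}) + 3V(F_{m-2}) − 4V(F_{m-3}) − 2V(F_{m-4}) + 2V(F_{m-5}) + 1 − 2⌊m/2⌋. -/

import Mathlib

noncomputable def R (n : ℕ) : ℕ :=
  Nat.card {s : Finset ℕ // (∀ x ∈ s, 0 < x ∧ ∃ m, Nat.fib m = x) ∧ ∑ x ∈ s, x = n}

def bb (k n : ℕ) : ℕ :=
  (((Finset.Icc 2 k).powerset).filter (fun s => ∑ i ∈ s, Nat.fib i = n)).card

lemma fib_injOn : Set.InjOn Nat.fib (Finset.Icc 2 k) := by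
  intro a ha b hb hab
  simp only [Finset.coe_Icc, Set.mem_Icc] at ha hb
  exact Nat.fib_strictMonoOn.injOn ha.1 hb.1 hab

lemma R_eq_bb {k n : ℕ} (hn : n < Nat.fib (k + 1)) : R n = bb k n := by
  have hinj : ∀ s₁ ∈ (Finset.Icc 2 k).powerset, ∀ s₂ ∈ (Finset.Icc 2 k).powerset,
      s₁.image Nat.fib = s₂.image Nat.fib → s₁ = s₂ := by
    intro s₁ h₁ s₂ h₂ h
    simp only [Finset.mem_powerset] at h₁ h₂
    ext i
    constructor
    · intro hi
      have : Nat.fib i ∈ s₂.image Nat.fib := h ▸ Finset.mem_image_of_mem _ hi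
      obtain ⟨j, hj, hij⟩ := Finset.mem_image.mp this
      rwa [fib_injOn (h₂ hj) (h₁ hi) hij] at hj
    · intro hi
      have : Nat.fib i ∈ s₁.image Nat.fib := h ▸ Finset.mem_image_of_mem _ hi
      obtain ⟨j, hj, hij⟩ := Finset.mem_image.mp this
      rwa [fib_injOn (h₁ hj) (h₂ hi) hij] at hj
  have hset : {s : Finset ℕ | (∀ x ∈ s, 0 < x ∧ ∃ m, Nat.fib m = x) ∧ ∑ x ∈ s, x = n}
      = ↑((((Finset.Icc 2 k).powerset).filter (fun s => ∑ i ∈ s, Nat.fib i = n)).image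
          (Finset.image Nat.fib)) := by
    ext s
    simp only [Set.mem_setOf_eq, Finset.coe_image, Set.mem_image, Finset.mem_coe,
      Finset.mem_filter, Finset.mem_powerset]
    constructor
    · rintro ⟨hpos, hsum⟩
      have himg : ((Finset.Icc 2 k).filter (fun i => Nat.fib i ∈ s)).image Nat.fib = s := by
        ext x
        simp only [Finset.mem_image, Finset.mem_filter, Finset.mem_Icc]
        constructor
        · rintro ⟨i, ⟨-, hmem⟩, rfl⟩; exact hmem
        · intro hx
          obtain ⟨hxpos, m, rfl⟩ := hpos x hx
          have hxn : Nat.fib m ≤ n := hsum ▸ Finset.single_le_sum (f := fun x => x)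
            (fun a _ => Nat.zero_le a) hx
          by_cases hm2 : 2 ≤ m
          · refine ⟨m, ⟨⟨hm2, ?_⟩, hx⟩, rfl⟩
            by_contra hk
            exact absurd (Nat.fib_mono (by omega : k + 1 ≤ m)) (by omega)
          · have hm1 : Nat.fib m = 1 := by interval_cases m <;> simp_all
            refine ⟨2, ⟨⟨le_refl 2, ?_⟩, by rwa [Nat.fib_two, ← hm1]⟩, by rw [Nat.fib_two, hm1]⟩
            have h2 : Nat.fib 2 = 1 := rfl
            by_contra hk
            have : k + 1 ≤ 2 := by omega
            have := Nat.fib_mono this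
            omega
        
      refine ⟨(Finset.Icc 2 k).filter (fun i => Nat.fib i ∈ s), ⟨Finset.filter_subset _ _, ?_⟩, himg⟩
      have hs := Finset.sum_image (s := (Finset.Icc 2 k).filter (fun i => Nat.fib i ∈ s))
        (f := fun x => x) (g := Nat.fib)
        (fun a ha b hb => fib_injOn ((Finset.filter_subset _ _) ha) ((Finset.filter_subset _ _) hb))
      rw [himg, hsum] at hs
      exact hs.symm
    · rintro ⟨s', ⟨hsub, hsum⟩, rfl⟩
      constructor
      · intro x hx
        obtain ⟨i, hi, rfl⟩ := Finset.mem_image.mp hx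
        have hi2 : 2 ≤ i := (Finset.mem_Icc.mp (hsub hi)).1
        exact ⟨by simpa using Nat.lt_of_lt_of_le Nat.zero_lt_one (by
          have := Nat.fib_pos.mpr (by omega : 0 < i); omega), ⟨i, rfl⟩⟩
      · rw [Finset.sum_image (fun a ha b hb => fib_injOn (hsub ha) (hsub hb))]
        exact hsum
  calc R n = Nat.card {s : Finset ℕ | (∀ x ∈ s, 0 < x ∧ ∃ m, Nat.fib m = x) ∧ ∑ x ∈ s, x = n} := rfl
    _ = bb k n := by
        rw [Nat.card_coe_set_eq, hset, Set.ncard_coe_finset,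
          Finset.card_image_of_injOn (fun s₁ h₁ s₂ h₂ => hinj s₁
            (Finset.mem_of_mem_filter _ h₁) s₂ (Finset.mem_of_mem_filter _ h₂)), bb]



lemma bb_succ (k j : ℕ) (hk : 1 ≤ k) :
    bb (k+1) (Nat.fib (k+1) + j) = bb k (Nat.fib (k+1) + j) + bb k j := by
  classical
  set c := Nat.fib (k+1) + j with hc
  have hnot : (k+1) ∉ Finset.Icc 2 k := by simp [Finset.mem_Icc]
  have hIcc : Finset.Icc 2 (k+1) = insert (k+1) (Finset.Icc 2 k) := by
    ext i; simp [Finset.mem_Icc, Finset.mem_insert]; omega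
  unfold bb
  rw [hIcc, Finset.powerset_insert, Finset.filter_union, Finset.card_union_of_disjoint]
  · congr 1
    rw [Finset.filter_image, Finset.card_image_of_injOn]
    · congr 1
      ext t
      simp only [Finset.mem_filter, Finset.mem_powerset]
      constructor
      · rintro ⟨hsub, hsum⟩
        refine ⟨hsub, ?_⟩
        rw [Finset.sum_insert (fun h => hnot (hsub h))] at hsum
        omega
      · rintro ⟨hsub, hsum⟩
        refine ⟨hsub, ?_⟩
        rw [Finset.sum_insert (fun h => hnot (hsub h))]
        omega
    · intro t1 h1 t2 h2 he
      simp only [Finset.coe_filter, Set.mem_setOf_eq, Finset.mem_powerset] at h1 h2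
      have n1 : k+1 ∉ t1 := fun h => hnot (h1.1 h)
      have n2 : k+1 ∉ t2 := fun h => hnot (h2.1 h)
      rw [← Finset.erase_insert n1, he, Finset.erase_insert n2]
  · rw [Finset.disjoint_left]
    intro t ht1 ht2
    simp only [Finset.mem_filter, Finset.mem_powerset, Finset.mem_image] at ht1 ht2
    obtain ⟨u, -, rfl⟩ := ht2.1
    exact hnot (ht1.1 (Finset.mem_insert_self _ _))



lemma sum_fib_Icc (k : ℕ) (hk : 1 ≤ k) :
    (∑ i ∈ Finset.Icc 2 k, Nat.fib i) + 2 = Nat.fib (k + 2) := by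
  induction k with
  | zero => omega
  | succ k ih =>
    rcases Nat.lt_or_ge k 1 with h | h
    · interval_cases k <;> decide
    · have hIcc : Finset.Icc 2 (k+1) = insert (k+1) (Finset.Icc 2 k) := by
        ext i; simp [Finset.mem_Icc, Finset.mem_insert]; omega
      have hnot : (k+1) ∉ Finset.Icc 2 k := by simp [Finset.mem_Icc]
      rw [hIcc, Finset.sum_insert hnot]
      have := ih h
      have hf : Nat.fib (k+3) = Nat.fib (k+1) + Nat.fib (k+2) := Nat.fib_add_two
      have h3 : k+1+2 = k+3 := by omega
      rw [h3]
      omega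

lemma bb_palindrome (k a b : ℕ) (hab : a + b = ∑ i ∈ Finset.Icc 2 k, Nat.fib i) :
    bb k a = bb k b := by
  classical
  unfold bb
  apply Finset.card_bij (fun s _ => Finset.Icc 2 k \ s)
  · intro s hs
    simp only [Finset.mem_filter, Finset.mem_powerset] at hs ⊢
    refine ⟨Finset.sdiff_subset, ?_⟩
    have := Finset.sum_sdiff (f := Nat.fib) hs.1
    omega
  · intro s1 h1 s2 h2 he
    simp only [Finset.mem_filter, Finset.mem_powerset] at h1 h2
    have : ∀ s : Finset ℕ, s ⊆ Finset.Icc 2 k → Finset.Icc 2 k \ (Finset.Icc 2 k \ s) = s := by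
      intro s hs
      exact sdiff_sdiff_eq_self hs
    rw [← this s1 h1.1, he, this s2 h2.1]
  · intro t ht
    simp only [Finset.mem_filter, Finset.mem_powerset] at ht
    refine ⟨Finset.Icc 2 k \ t, ?_, ?_⟩
    · simp only [Finset.mem_filter, Finset.mem_powerset]
      refine ⟨Finset.sdiff_subset, ?_⟩
      have := Finset.sum_sdiff (f := Nat.fib) ht.1
      omega
    · exact sdiff_sdiff_eq_self ht.1

lemma bb_eq_zero {k n : ℕ} (hn : (∑ i ∈ Finset.Icc 2 k, Nat.fib i) < n) : bb k n = 0 := by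
  unfold bb
  rw [Finset.card_eq_zero, Finset.filter_eq_empty_iff]
  intro s hs
  simp only [Finset.mem_powerset] at hs
  intro h
  have := Finset.sum_le_sum_of_subset (f := Nat.fib) hs
  omega

lemma bb_zero_eq_one (k : ℕ) : bb k 0 = 1 := by
  unfold bb
  rw [Finset.card_eq_one]
  refine ⟨∅, ?_⟩
  ext s
  simp only [Finset.mem_filter, Finset.mem_powerset, Finset.mem_singleton]
  constructor
  · rintro ⟨hsub, hsum⟩
    by_contra hne
    obtain ⟨i, hi⟩ := Finset.nonempty_iff_ne_empty.mpr hne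
    have h2 : 2 ≤ i := (Finset.mem_Icc.mp (hsub hi)).1
    have hpos : 0 < Nat.fib i := Nat.fib_pos.mpr (by omega)
    have := Finset.single_le_sum (f := Nat.fib) (fun a _ => Nat.zero_le _) hi
    omega
  · rintro rfl
    exact ⟨Finset.empty_subset _, Finset.sum_empty⟩

lemma R_zero : R 0 = 1 := by
  rw [R_eq_bb (k := 1) (by decide), bb_zero_eq_one]

lemma R_one : R 1 = 1 := by
  rw [R_eq_bb (k := 2) (by decide)]; decide

lemma block {k i j : ℕ} (hk : 2 ≤ k) (hij : i + j + 2 = Nat.fib k) :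
    R (Nat.fib (k+1) + i) = R i + R j := by
  have hfib2 : Nat.fib (k+2) = Nat.fib k + Nat.fib (k+1) := Nat.fib_add_two
  have hS := sum_fib_Icc k (by omega)
  have hnorm : Nat.fib (k+1+1) = Nat.fib (k+2) := rfl
  have h1 : R (Nat.fib (k+1) + i) = bb (k+1) (Nat.fib (k+1) + i) :=
    R_eq_bb (by omega)
  rw [h1, bb_succ k i (by omega)]
  have h2 : bb k i = R i := (R_eq_bb (by
    have := Nat.fib_le_fib_succ (n := k); omega)).symm
  have h3 : bb k (Nat.fib (k+1) + i) = bb k j := by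
    apply bb_palindrome
    omega
  have h4 : bb k j = R j := (R_eq_bb (by
    have := Nat.fib_le_fib_succ (n := k); omega)).symm
  rw [h2, h3, h4]
  omega

lemma R_fib_sub_one : ∀ k, 2 ≤ k → R (Nat.fib k - 1) = 1 := by
  intro k
  induction k using Nat.strong_induction_on with
  | _ k ih =>
    intro hk
    match k, hk with
    | 2, _ => simpa using R_zero
    | 3, _ => simpa [show Nat.fib 3 = 2 from rfl] using R_one
    | (k+4), _ => ?_
    have hk2 : 2 ≤ k + 2 := by omega
    have hpos : 0 < Nat.fib (k+2) := Nat.fib_pos.mpr (by omega)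
    have hfib : Nat.fib (k+4) = Nat.fib (k+2) + Nat.fib (k+3) := Nat.fib_add_two
    have hS := sum_fib_Icc (k+2) (by omega)
    have hn1 : Nat.fib (k+2+2) = Nat.fib (k+4) := rfl
    have hn2 : Nat.fib (k+3+1) = Nat.fib (k+4) := rfl
    have hn3 : Nat.fib (k+2+1) = Nat.fib (k+3) := rfl
    have heq : Nat.fib (k+4) - 1 = Nat.fib (k+3) + (Nat.fib (k+2) - 1) := by omega
    have hp3 : 0 < Nat.fib (k+3) := Nat.fib_pos.mpr (by omega)
    rw [heq, R_eq_bb (k := k+3) (by omega), bb_succ (k+2) _ (by omega)]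
    have hz : bb (k+2) (Nat.fib (k+3) + (Nat.fib (k+2) - 1)) = 0 :=
      bb_eq_zero (by omega)
    have hr : bb (k+2) (Nat.fib (k+2) - 1) = R (Nat.fib (k+2) - 1) := by
      refine (R_eq_bb ?_).symm
      have := Nat.fib_le_fib_succ (n := k+2); omega
    rw [hz, hr, ih (k+2) (by omega) hk2]

lemma fib_ge_two {k : ℕ} (hk : 3 ≤ k) : 2 ≤ Nat.fib k := by
  calc 2 = Nat.fib 3 := rfl
  _ ≤ Nat.fib k := Nat.fib_mono hk

lemma R_fib_sub_two : ∀ k, 3 ≤ k → R (Nat.fib k - 2) = (k-1)/2 := by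
  intro k
  induction k using Nat.strong_induction_on with
  | _ k ih =>
    intro hk
    match k, hk with
    | 3, _ => simpa [show Nat.fib 3 = 2 from rfl] using R_zero
    | 4, _ => simpa [show Nat.fib 4 = 3 from rfl] using R_one
    | (k+5), _ => ?_
    have h2 : 2 ≤ Nat.fib (k+3) := fib_ge_two (by omega)
    have hfib : Nat.fib (k+5) = Nat.fib (k+3) + Nat.fib (k+4) := Nat.fib_add_two
    have harg : Nat.fib (k+5) - 2 = Nat.fib (k+3+1) + (Nat.fib (k+3) - 2) := by
      have : Nat.fib (k+3+1) = Nat.fib (k+4) := rfl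
      omega
    rw [harg, block (j := 0) (by omega) (by omega), ih (k+3) (by omega) (by omega), R_zero]
    omega

lemma R_fib : ∀ k, 3 ≤ k → R (Nat.fib k) = k/2 := by
  intro k
  induction k using Nat.strong_induction_on with
  | _ k ih =>
    intro hk
    match k, hk with
    | 3, _ =>
      have : R 2 = bb 3 2 := R_eq_bb (by decide)
      simp only [show Nat.fib 3 = 2 from rfl, this]
      decide
    | (k+4), _ => ?_
    have h2 : 2 ≤ Nat.fib (k+3) := fib_ge_two (by omega)
    have hfa : Nat.fib (k+4) = Nat.fib (k+2) + Nat.fib (k+3) := Nat.fib_add_two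
    have hfb : Nat.fib (k+5) = Nat.fib (k+3) + Nat.fib (k+4) := Nat.fib_add_two
    have hn1 : Nat.fib (k+4+1) = Nat.fib (k+5) := rfl
    have hn2 : Nat.fib (k+3+1) = Nat.fib (k+4) := rfl
    have hn3 : Nat.fib (k+3+2) = Nat.fib (k+5) := rfl
    have hpos : 0 < Nat.fib (k+3) := by omega
    have h1 : R (Nat.fib (k+4)) = bb (k+4) (Nat.fib (k+4)) := R_eq_bb (by omega)
    have h2' : bb (k+4) (Nat.fib (k+4) + 0) = bb (k+3) (Nat.fib (k+4) + 0) + bb (k+3) 0 :=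
      bb_succ (k+3) 0 (by omega)
    have hS := sum_fib_Icc (k+3) (by omega)
    have h3 : bb (k+3) (Nat.fib (k+4)) = bb (k+3) (Nat.fib (k+3) - 2) := by
      apply bb_palindrome; omega
    have h4 : bb (k+3) (Nat.fib (k+3) - 2) = R (Nat.fib (k+3) - 2) :=
      (R_eq_bb (by omega)).symm
    have h5 : R (Nat.fib (k+3) - 2) = (k+2)/2 := by
      have := R_fib_sub_two (k+3) (by omega); omega
    rw [h1, show Nat.fib (k+4) = Nat.fib (k+4) + 0 by omega, h2', add_zero, h3, h4, h5, bb_zero_eq_one]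
    omega

noncomputable def Q (c : ℕ) : ℕ := ∑ n ∈ Finset.range c, R n ^ 2
noncomputable def DD (c : ℕ) : ℕ := ∑ j ∈ Finset.range (c+1), R j * R (c - j)

lemma key_sum (c : ℕ) :
    ∑ i ∈ Finset.range c, (R (i+1) + R (c-1-i))^2 + 1 + 2 * R c
      = Q (c+1) + Q c + 2 * DD c := by
  have hexp : ∑ i ∈ Finset.range c, (R (i+1) + R (c-1-i))^2
      = ∑ i ∈ Finset.range c, R (i+1)^2 + ∑ i ∈ Finset.range c, R (c-1-i)^2
        + 2 * ∑ i ∈ Finset.range c, R (i+1) * R (c-1-i) := by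
    rw [Finset.mul_sum, ← Finset.sum_add_distrib, ← Finset.sum_add_distrib]
    apply Finset.sum_congr rfl
    intro i _
    ring
  have h1 : Q (c+1) = ∑ i ∈ Finset.range c, R (i+1)^2 + 1 := by
    rw [Q, Finset.sum_range_succ' (fun n => R n ^ 2) c, R_zero]
    norm_num
  have h2 : ∑ i ∈ Finset.range c, R (c-1-i)^2 = Q c :=
    Finset.sum_range_reflect (fun n => R n ^ 2) c
  have h3 : DD c = ∑ i ∈ Finset.range c, R (i+1) * R (c-1-i) + R c := by
    rw [DD, Finset.sum_range_succ' (fun j => R j * R (c - j)) c, R_zero]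
    simp only [Nat.sub_zero, one_mul]
    congr 1
    apply Finset.sum_congr rfl
    intro i _
    rw [Nat.sub_sub, Nat.add_comm 1 i]
  rw [hexp, h2, h3]
  omega

lemma idA (k : ℕ) :
    (Q (Nat.fib (k+6) + 1) : ℤ)
      = Q (Nat.fib (k+5) + 1) + 2 * Q (Nat.fib (k+4) + 1) + 2 * DD (Nat.fib (k+4) - 2)
        + (((k+6)/2 : ℕ) : ℤ)^2 - 2 * (((k+4)/2 : ℕ) : ℤ)^2 - (((k+3)/2 : ℕ) : ℤ)^2
        - 2 * (((k+3)/2 : ℕ) : ℤ) - 2 := by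
  obtain ⟨a', ha⟩ : ∃ a', Nat.fib (k+4) = a' + 2 := by
    have := fib_ge_two (k := k+4) (by omega)
    exact ⟨Nat.fib (k+4) - 2, by omega⟩
  set b := Nat.fib (k+5) with hb
  have hfib6 : Nat.fib (k+6) = (a' + 2) + b := by
    rw [← ha, hb]; exact Nat.fib_add_two
  have hsplit : Q (Nat.fib (k+6) + 1)
      = Q (b+1) + ∑ i ∈ Finset.range (a'+2), R ((b+1) + i)^2 := by
    rw [Q, Q, show Nat.fib (k+6) + 1 = (b+1) + (a'+2) by omega,
      Finset.sum_range_add (fun n => R n ^ 2) (b+1) (a'+2)]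
  have hpeel : ∑ i ∈ Finset.range (a'+2), R ((b+1) + i)^2
      = ∑ i ∈ Finset.range a', R ((b+1) + i)^2 + R (b+1+a')^2 + R (b+2+a')^2 := by
    rw [Finset.sum_range_succ, Finset.sum_range_succ,
      show b+1+(a'+1) = b+2+a' by omega]
  have hblock : ∑ i ∈ Finset.range a', R ((b+1) + i)^2
      = ∑ i ∈ Finset.range a', (R (i+1) + R (a'-1-i))^2 := by
    apply Finset.sum_congr rfl
    intro i hi
    have hi' : i < a' := Finset.mem_range.mp hi
    have harg : (b+1) + i = Nat.fib (k+4+1) + (i+1) := by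
      simp only [show Nat.fib (k+4+1) = b from rfl]; omega
    rw [harg, block (k := k+4) (by omega) (by omega : (i+1) + (a'-1-i) + 2 = Nat.fib (k+4))]
  have hkey := key_sum a'
  have hv1 : R (b+1+a') = 1 := by
    have harg : b+1+a' = Nat.fib (k+6) - 1 := by omega
    rw [harg, R_fib_sub_one (k+6) (by omega)]
  have hv2 : R (b+2+a') = (k+6)/2 := by
    have harg : b+2+a' = Nat.fib (k+6) := by omega
    rw [harg, R_fib (k+6) (by omega)]
  have hv3 : R a' = (k+3)/2 := by
    have harg : a' = Nat.fib (k+4) - 2 := by omega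
    have h := R_fib_sub_two (k+4) (by omega)
    rw [harg, h]
    omega
  have hv4 : R (a'+1) = 1 := by
    have harg : a'+1 = Nat.fib (k+4) - 1 := by omega
    rw [harg, R_fib_sub_one (k+4) (by omega)]
  have hv5 : R (a'+2) = (k+4)/2 := by
    rw [← ha, R_fib (k+4) (by omega)]
  have hQ4 : Q (Nat.fib (k+4) + 1) = Q (a'+1) + R (a'+1)^2 + R (a'+2)^2 := by
    rw [ha, show a'+2+1 = (a'+1)+1+1 by omega, Q, Finset.sum_range_succ, Finset.sum_range_succ, ← Q]
  have hQa : Q (a'+1) = Q a' + R a' ^ 2 := by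
    rw [Q, Finset.sum_range_succ, ← Q]
  have hDD : DD (Nat.fib (k+4) - 2) = DD a' := by
    congr 1; omega
  -- assemble over ℤ
  have z1 : (Q (Nat.fib (k+6) + 1) : ℤ)
      = Q (b+1) + (∑ i ∈ Finset.range a', (R (i+1) + R (a'-1-i))^2 : ℕ) + 1 + ((((k+6)/2 : ℕ) : ℤ))^2 := by
    rw [hsplit, hpeel, hblock] at *
    push_cast
    rw [hv1, hv2]
    push_cast
    ring
  have z2 : ((∑ i ∈ Finset.range a', (R (i+1) + R (a'-1-i))^2 : ℕ) : ℤ) + 1 + 2 * (((k+3)/2 : ℕ) : ℤ)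
      = Q (a'+1) + Q a' + 2 * DD a' := by
    exact_mod_cast congrArg (Nat.cast : ℕ → ℤ) (by rw [← hv3]; exact hkey)
  have z3 : (Q (Nat.fib (k+4) + 1) : ℤ) = Q (a'+1) + 1 + (((k+4)/2 : ℕ) : ℤ)^2 := by
    rw [hQ4, hv4, hv5]; push_cast; ring
  have z4 : (Q (a'+1) : ℤ) = Q a' + (((k+3)/2 : ℕ) : ℤ)^2 := by
    rw [hQa, hv3]; push_cast; ring
  have z5 : (DD (Nat.fib (k+4) - 2) : ℤ) = DD a' := by rw [hDD]
  rw [z1, z5]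
  linarith [z2, z3, z4]

lemma idB (k : ℕ) :
    (DD (Nat.fib (k+6) - 2) : ℤ)
      = 2 * DD (Nat.fib (k+4) - 2) + 2 * DD (Nat.fib (k+3) - 2)
        + 2 * Q (Nat.fib (k+4) + 1) + 2 * Q (Nat.fib (k+3) + 1)
        - 2 * (((k+4)/2 : ℕ) : ℤ)^2 - 2 * (((k+3)/2 : ℕ) : ℤ)^2 - 2 := by
  obtain ⟨a', ha⟩ : ∃ a', Nat.fib (k+4) = a' + 2 := by
    have := fib_ge_two (k := k+4) (by omega)
    exact ⟨Nat.fib (k+4) - 2, by omega⟩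
  obtain ⟨g, hg⟩ : ∃ g, Nat.fib (k+3) = g + 2 := by
    have := fib_ge_two (k := k+3) (by omega)
    exact ⟨Nat.fib (k+3) - 2, by omega⟩
  have hb : Nat.fib (k+5) = a' + g + 4 := by
    have : Nat.fib (k+5) = Nat.fib (k+3) + Nat.fib (k+4) := Nat.fib_add_two
    omega
  have hc : Nat.fib (k+6) = 2*a' + g + 6 := by
    have : Nat.fib (k+6) = Nat.fib (k+4) + Nat.fib (k+5) := Nat.fib_add_two
    omega
  set c := 2*a' + g + 4 with hcdef
  have hC : Nat.fib (k+6) - 2 = c := by omega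
  -- split the sum into three chunks
  have hsplit : DD c = ∑ j ∈ Finset.range (a'+1), R j * R (c - j)
      + ∑ t ∈ Finset.range (g+3), R ((a'+1) + t) * R (c - ((a'+1) + t))
      + ∑ i ∈ Finset.range (a'+1), R (((a'+1)+(g+3)) + i) * R (c - (((a'+1)+(g+3)) + i)) := by
    rw [DD, show c + 1 = ((a'+1) + (g+3)) + (a'+1) by omega,
      Finset.sum_range_add (fun j => R j * R (c - j)) ((a'+1)+(g+3)) (a'+1),
      Finset.sum_range_add (fun j => R j * R (c - j)) (a'+1) (g+3)]
  -- low chunk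
  have hlow : ∑ j ∈ Finset.range (a'+1), R j * R (c - j) = DD a' + Q (a'+1) := by
    have hpt : ∀ j ∈ Finset.range (a'+1), R j * R (c - j) = R j * R (a'-j) + R j ^ 2 := by
      intro j hj
      have hj' : j ≤ a' := by have := Finset.mem_range.mp hj; omega
      have harg : c - j = Nat.fib (k+4+1) + (a'-j) := by
        have : Nat.fib (k+4+1) = Nat.fib (k+5) := rfl
        omega
      rw [harg, block (k := k+4) (by omega) (by omega : (a'-j) + j + 2 = Nat.fib (k+4))]
      ring
    rw [Finset.sum_congr rfl hpt, Finset.sum_add_distrib, DD, Q]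
  -- high chunk
  have hhigh : ∑ i ∈ Finset.range (a'+1), R (((a'+1)+(g+3)) + i) * R (c - (((a'+1)+(g+3)) + i))
      = DD a' + Q (a'+1) := by
    have hpt : ∀ i ∈ Finset.range (a'+1),
        R (((a'+1)+(g+3)) + i) * R (c - (((a'+1)+(g+3)) + i)) = R i * R (a'-i) + R (a'-i) ^ 2 := by
      intro i hi
      have hi' : i ≤ a' := by have := Finset.mem_range.mp hi; omega
      have harg2 : c - (((a'+1)+(g+3)) + i) = a' - i := by omega
      have harg : ((a'+1)+(g+3)) + i = Nat.fib (k+4+1) + i := by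
        have : Nat.fib (k+4+1) = Nat.fib (k+5) := rfl
        omega
      rw [harg2, harg, block (k := k+4) (by omega) (by omega : i + (a'-i) + 2 = Nat.fib (k+4))]
      ring
    have hq : ∑ i ∈ Finset.range (a'+1), R (a'-i)^2 = Q (a'+1) := by
      rw [Q, ← Finset.sum_range_reflect (fun n => R n ^ 2) (a'+1)]
      apply Finset.sum_congr rfl
      intro i _
      rw [show a' + 1 - 1 - i = a' - i by omega]
    rw [Finset.sum_congr rfl hpt, Finset.sum_add_distrib, hq, DD]
  -- middle chunk
  have hmidpt : ∀ s ∈ Finset.range (g+1),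
      R ((a'+1) + (s+1)) * R (c - ((a'+1) + (s+1))) = (R s + R (g-s))^2 := by
    intro s hs
    have hs' : s ≤ g := by have := Finset.mem_range.mp hs; omega
    have h1 : (a'+1) + (s+1) = Nat.fib (k+3+1) + s := by
      have : Nat.fib (k+3+1) = Nat.fib (k+4) := rfl
      omega
    have h2 : c - ((a'+1) + (s+1)) = Nat.fib (k+3+1) + (g-s) := by
      have : Nat.fib (k+3+1) = Nat.fib (k+4) := rfl
      omega
    rw [h2, h1, block (k := k+3) (by omega) (by omega : s + (g-s) + 2 = Nat.fib (k+3)),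
      block (k := k+3) (by omega) (by omega : (g-s) + s + 2 = Nat.fib (k+3))]
    ring
  have hmid : ∑ t ∈ Finset.range (g+3), R ((a'+1) + t) * R (c - ((a'+1) + t))
      = ∑ s ∈ Finset.range (g+1), (R s + R (g-s))^2 + 2 := by
    rw [Finset.sum_range_succ, Finset.sum_range_succ' _ (g+1)]
    have e1 : R ((a'+1) + (g+2)) * R (c - ((a'+1) + (g+2))) = 1 := by
      have h1 : (a'+1) + (g+2) = Nat.fib (k+5) - 1 := by omega
      have h2 : c - ((a'+1) + (g+2)) = Nat.fib (k+4) - 1 := by omega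
      rw [h2, h1, R_fib_sub_one (k+5) (by omega), R_fib_sub_one (k+4) (by omega)]
    have e2 : R ((a'+1) + 0) * R (c - ((a'+1) + 0)) = 1 := by
      have h1 : (a'+1) + 0 = Nat.fib (k+4) - 1 := by omega
      have h2 : c - ((a'+1) + 0) = Nat.fib (k+5) - 1 := by omega
      rw [h2, h1, R_fib_sub_one (k+4) (by omega), R_fib_sub_one (k+5) (by omega)]
    rw [e1, e2, Finset.sum_congr rfl hmidpt]
  have hmidexp : ∑ s ∈ Finset.range (g+1), (R s + R (g-s))^2
      = 2 * Q (g+1) + 2 * DD g := by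
    have hexp : ∀ s ∈ Finset.range (g+1),
        (R s + R (g-s))^2 = R s ^2 + R (g-s)^2 + 2 * (R s * R (g-s)) := by
      intro s _; ring
    rw [Finset.sum_congr rfl hexp, Finset.sum_add_distrib, Finset.sum_add_distrib,
      ← Finset.mul_sum]
    have hrefl : ∑ s ∈ Finset.range (g+1), R (g-s)^2 = ∑ s ∈ Finset.range (g+1), R s ^2 := by
      rw [← Finset.sum_range_reflect (fun n => R n ^ 2) (g+1)]
      apply Finset.sum_congr rfl
      intro i _
      rw [show g + 1 - 1 - i = g - i by omega]
    rw [hrefl, ← Q, ← DD]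
    ring
  -- values for conversions
  have hv5 : R (a'+1) = 1 := by
    rw [show a'+1 = Nat.fib (k+4) - 1 by omega, R_fib_sub_one (k+4) (by omega)]
  have hv6 : R (a'+2) = (k+4)/2 := by rw [← ha, R_fib (k+4) (by omega)]
  have hv7 : R (g+1) = 1 := by
    rw [show g+1 = Nat.fib (k+3) - 1 by omega, R_fib_sub_one (k+3) (by omega)]
  have hv8 : R (g+2) = (k+3)/2 := by rw [← hg, R_fib (k+3) (by omega)]
  have hQ4 : Q (Nat.fib (k+4) + 1) = Q (a'+1) + R (a'+1)^2 + R (a'+2)^2 := by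
    rw [ha, show a'+2+1 = (a'+1)+1+1 by omega, Q, Finset.sum_range_succ, Finset.sum_range_succ, ← Q]
  have hQ3 : Q (Nat.fib (k+3) + 1) = Q (g+1) + R (g+1)^2 + R (g+2)^2 := by
    rw [hg, show g+2+1 = (g+1)+1+1 by omega, Q, Finset.sum_range_succ, Finset.sum_range_succ, ← Q]
  have hDD4 : DD (Nat.fib (k+4) - 2) = DD a' := by congr 1; omega
  have hDD3 : DD (Nat.fib (k+3) - 2) = DD g := by congr 1; omega
  -- assemble
  have hN : DD c = 2 * DD a' + 2 * Q (a'+1) + 2 * Q (g+1) + 2 * DD g + 2 := by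
    rw [hsplit, hlow, hhigh, hmid, hmidexp]; ring
  have z1 : (Q (Nat.fib (k+4) + 1) : ℤ) = Q (a'+1) + 1 + (((k+4)/2 : ℕ) : ℤ)^2 := by
    rw [hQ4, hv5, hv6]; push_cast; ring
  have z2 : (Q (Nat.fib (k+3) + 1) : ℤ) = Q (g+1) + 1 + (((k+3)/2 : ℕ) : ℤ)^2 := by
    rw [hQ3, hv7, hv8]; push_cast; ring
  rw [hC, hDD4, hDD3]
  have zN : (DD c : ℤ) = 2 * DD a' + 2 * Q (a'+1) + 2 * Q (g+1) + 2 * DD g + 2 := by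
    exact_mod_cast congrArg (Nat.cast : ℕ → ℤ) hN
  linarith [z1, z2, zN]


noncomputable def A (H : ℕ) : ℕ := ∑ n ∈ Finset.range (H + 1), R n

noncomputable def V (H : ℕ) : ℕ := ∑ n ∈ Finset.range (H + 1), (R n) ^ 2

lemma V_eq_Q (H : ℕ) : V H = Q (H+1) := rfl

lemma Q_eq_bb (c : ℕ) (hc : c ≤ 35) : Q c = ∑ n ∈ Finset.range c, bb 9 n ^ 2 := by
  apply Finset.sum_congr rfl
  intro n hn
  have hn' : n < 35 := by have := Finset.mem_range.mp hn; omega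
  rw [R_eq_bb (k := 9) (by
    show n < Nat.fib 10
    norm_num [Nat.fib]
    omega)]

set_option maxRecDepth 40000 in
lemma Qval : Q 2 = 2 ∧ Q 3 = 3 ∧ Q 4 = 7 ∧ Q 6 = 12 ∧ Q 9 = 26 ∧ Q 14 = 53 ∧
    Q 22 = 121 ∧ Q 35 = 280 := by
  rw [Q_eq_bb 2 (by omega), Q_eq_bb 3 (by omega), Q_eq_bb 4 (by omega), Q_eq_bb 6 (by omega),
    Q_eq_bb 9 (by omega), Q_eq_bb 14 (by omega), Q_eq_bb 22 (by omega), Q_eq_bb 35 (by omega)]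
  refine ⟨?_, ?_, ?_, ?_, ?_, ?_, ?_, ?_⟩ <;> decide

theorem V_fib_recurrence (m : ℕ) (hm : 7 ≤ m) :
    (V (Nat.fib m) : ℤ) =
      2 * V (Nat.fib (m - 1)) + 3 * V (Nat.fib (m - 2)) - 4 * V (Nat.fib (m - 3))
        - 2 * V (Nat.fib (m - 4)) + 2 * V (Nat.fib (m - 5)) + 1 - 2 * (m / 2 : ℕ) := by
  obtain ⟨h1, h2, h3, h4, h5, h6, h7, h8⟩ := Qval
  rcases Nat.lt_or_ge m 10 with hlt | hge
  · interval_cases m <;>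
    · simp only [V_eq_Q]
      norm_num [Nat.fib]
      simp only [h1, h2, h3, h4, h5, h6, h7, h8]
      norm_num
  · obtain ⟨M, rfl⟩ : ∃ M, m = M + 10 := ⟨m - 10, by omega⟩
    simp only [show M + 10 - 1 = M + 9 by omega, show M + 10 - 2 = M + 8 by omega,
      show M + 10 - 3 = M + 7 by omega, show M + 10 - 4 = M + 6 by omega,
      show M + 10 - 5 = M + 5 by omega, V_eq_Q]
    have hA0 := idA (M+4)
    have hA1 := idA (M+3)
    have hA2 := idA (M+2)
    have hA3 := idA (M+1)
    have hA4 := idA (M+0)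
    have hB1 := idB (M+2)
    have hB2 := idB (M+1)
    set x := (M+3)/2 with hx
    set y := (M+4)/2 with hy
    have hxy : x + y = M + 3 := by omega
    simp only [show (M+4+6)/2 = y+3 by omega, show (M+4+4)/2 = y+2 by omega, show (M+4+3)/2 = x+2 by omega, show (M+3+6)/2 = x+3 by omega, show (M+3+4)/2 = x+2 by omega, show (M+3+3)/2 = y+1 by omega, show (M+2+6)/2 = y+2 by omega, show (M+2+4)/2 = y+1 by omega, show (M+2+3)/2 = x+1 by omega, show (M+1+6)/2 = x+2 by omega, show (M+1+4)/2 = x+1 by omega, show (M+1+3)/2 = y by omega, show (M+0+6)/2 = y+1 by omega, show (M+0+4)/2 = y by omega, show (M+0+3)/2 = x by omega, show (M+6)/2 = y+1 by omega, show (M+10)/2 = y+3 by omega] at *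
    push_cast at hA0 hA1 hA2 hA3 hA4 hB1 hB2 ⊢
    linarith [hA0, hA1, hA2, hA3, hA4, hB1, hB2]
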